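/- Let T be the set of stochastic vectors x in ℝ^m with t_k ≤ x_k ≤ w_k for all k, where t ≤ w componentwise. Then T has exactly one element if and only if at least one of the following holds: (1) Σ_k t_k = 1; (2) Σ_k w_k = 1; (3) Σ_k t_k < 1 < Σ_k w_k and exactly one index i satisfies t_i < w_i. -/

import Mathlib

/-- A stochastic vector in `ℝ^m`: nonnegative entries summing to 1. -/
def IsStoch {m : ℕ} (x : Fin m → ℝ) : Prop := (∀ i, 0 ≤ x i) ∧ ∑ i, x i = 1

/-- The transition set `T` is a singleton iff the lower endpoints sum to 1, or
the upper endpoints sum to 1, or `Σt < 1 < Σw` with exactly one free element. -/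
theorem stmt_9 (m : ℕ) (t w : Fin m → ℝ)
    (ht0 : ∀ k, 0 ≤ t k) (htw : ∀ k, t k ≤ w k) :
    (∃! x : Fin m → ℝ, IsStoch x ∧ ∀ k, t k ≤ x k ∧ x k ≤ w k) ↔
      ((∑ k, t k = 1) ∨ (∑ k, w k = 1) ∨
        (∑ k, t k < 1 ∧ 1 < ∑ k, w k ∧ ∃! i : Fin m, t i < w i)) := by
  constructor
  · rintro ⟨x, ⟨⟨hx0, hx1⟩, hxb⟩, huniq⟩
    have hSt : ∑ k, t k ≤ 1 := by
      rw [← hx1]; exact Finset.sum_le_sum fun k _ => (hxb k).1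
    have hSw : 1 ≤ ∑ k, w k := by
      rw [← hx1]; exact Finset.sum_le_sum fun k _ => (hxb k).2
    rcases eq_or_lt_of_le hSt with h1 | h1
    · exact Or.inl h1
    rcases eq_or_lt_of_le hSw with h2 | h2
    · exact Or.inr (Or.inl h2.symm)
    refine Or.inr (Or.inr ⟨h1, h2, ?_⟩)
    have hex : ∃ i, t i < w i := by
      by_contra h
      push_neg at h
      have : ∑ k, w k ≤ ∑ k, t k := Finset.sum_le_sum fun k _ => h k
      linarith
    obtain ⟨i, hi⟩ := hex
    refine ⟨i, hi, fun j hj' => ?_⟩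
    have hj : t j < w j := hj'
    by_contra hji
    have hij : i ≠ j := fun h => hji h.symm
    have hd : 0 < (∑ k, w k) - ∑ k, t k := by linarith
    set l : ℝ := ((∑ k, w k) - 1) / ((∑ k, w k) - ∑ k, t k) with hl
    have hl0 : 0 < l := div_pos (by linarith) hd
    have hl1 : l < 1 := by
      rw [hl, div_lt_one hd]; linarith
    set y : Fin m → ℝ := fun k => l * t k + (1 - l) * w k with hy
    have hyb : ∀ k, t k ≤ y k ∧ y k ≤ w k := fun k => by
      constructor <;> · simp only [hy]; nlinarith [htw k]
    have hy1 : ∑ k, y k = 1 := by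
      simp only [hy, Finset.sum_add_distrib, ← Finset.mul_sum]
      rw [hl]
      field_simp
      ring
    have hys : IsStoch y ∧ ∀ k, t k ≤ y k ∧ y k ≤ w k :=
      ⟨⟨fun k => le_trans (ht0 k) (hyb k).1, hy1⟩, hyb⟩
    have hyi : t i < y i ∧ y i < w i := by
      constructor <;> · simp only [hy]; nlinarith
    have hyj : t j < y j ∧ y j < w j := by
      constructor <;> · simp only [hy]; nlinarith
    set e : ℝ := min (w i - y i) (y j - t j) with he
    have he1 : e ≤ w i - y i := min_le_left _ _
    have he2 : e ≤ y j - t j := min_le_right _ _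
    have he0 : 0 < e := lt_min (by linarith [hyi.2]) (by linarith [hyj.1])
    set z : Fin m → ℝ :=
      fun k => y k + (if k = i then e else 0) - (if k = j then e else 0) with hz
    have hzi : z i = y i + e := by simp [hz, hij]
    have hzj : z j = y j - e := by simp [hz, hji]
    have hzo : ∀ k, k ≠ i → k ≠ j → z k = y k := by
      intro k hki hkj; simp [hz, hki, hkj]
    have hzb : ∀ k, t k ≤ z k ∧ z k ≤ w k := by
      intro k
      by_cases hki : k = i
      · subst hki
        rw [hzi]
        constructor <;> linarith [hyi.1]
      · by_cases hkj : k = j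
        · subst hkj
          rw [hzj]
          constructor <;> linarith [hyj.2]
        · rw [hzo k hki hkj]
          exact hyb k
    have hz1 : ∑ k, z k = 1 := by
      simp only [hz, Finset.sum_sub_distrib, Finset.sum_add_distrib,
        Finset.sum_ite_eq', Finset.mem_univ, if_pos, hy1]
      ring
    have hzs : IsStoch z ∧ ∀ k, t k ≤ z k ∧ z k ≤ w k :=
      ⟨⟨fun k => le_trans (ht0 k) (hzb k).1, hz1⟩, hzb⟩
    have heq : z = y := (huniq z hzs).trans (huniq y hys).symm
    have : z i = y i := congrFun heq i
    rw [hzi] at this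
    linarith
  · rintro (h1 | h2 | ⟨h1, h2, i, hi', hiu⟩)
    · refine ⟨t, ⟨⟨ht0, h1⟩, fun k => ⟨le_rfl, htw k⟩⟩, ?_⟩
      rintro y ⟨⟨hy0, hy1⟩, hyb⟩
      funext k
      by_contra hne
      have hk : t k < y k := lt_of_le_of_ne (hyb k).1 (Ne.symm hne)
      have : ∑ j, t j < ∑ j, y j :=
        Finset.sum_lt_sum (fun j _ => (hyb j).1) ⟨k, Finset.mem_univ k, hk⟩
      rw [h1, hy1] at this
      exact lt_irrefl 1 this
    · refine ⟨w, ⟨⟨fun k => le_trans (ht0 k) (htw k), h2⟩,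
        fun k => ⟨htw k, le_rfl⟩⟩, ?_⟩
      rintro y ⟨⟨hy0, hy1⟩, hyb⟩
      funext k
      by_contra hne
      have hk : y k < w k := lt_of_le_of_ne (hyb k).2 hne
      have : ∑ j, y j < ∑ j, w j :=
        Finset.sum_lt_sum (fun j _ => (hyb j).2) ⟨k, Finset.mem_univ k, hk⟩
      rw [h2, hy1] at this
      exact lt_irrefl 1 this
    · have hi : t i < w i := hi'
      have hfix : ∀ j, j ≠ i → t j = w j := by
        intro j hji
        by_contra hne
        exact hji (hiu j (lt_of_le_of_ne (htw j) hne))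
      have hSwSt : ∑ k, w k = (∑ k, t k) + (w i - t i) := by
        have h'' : ∑ k, (w k - t k) = w i - t i := by
          refine Finset.sum_eq_single_of_mem i (Finset.mem_univ i) ?_
          intro b _ hb
          rw [hfix b hb]; ring
        have h' : ∑ k, (w k - t k) = (∑ k, w k) - ∑ k, t k :=
          Finset.sum_sub_distrib _ _
        linarith
      set x : Fin m → ℝ := fun k => t k + (if k = i then 1 - ∑ j, t j else 0)
        with hx
      have hxi : x i = t i + (1 - ∑ j, t j) := by simp [hx]
      have hxo : ∀ k, k ≠ i → x k = t k := by intro k hki; simp [hx, hki]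
      have hx1 : ∑ k, x k = 1 := by
        simp only [hx, Finset.sum_add_distrib, Finset.sum_ite_eq',
          Finset.mem_univ, if_pos]
        ring
      have hxb : ∀ k, t k ≤ x k ∧ x k ≤ w k := by
        intro k
        by_cases hki : k = i
        · subst hki
          rw [hxi]
          constructor <;> linarith
        · rw [hxo k hki]
          exact ⟨le_rfl, htw k⟩
      refine ⟨x, ⟨⟨fun k => le_trans (ht0 k) (hxb k).1, hx1⟩, hxb⟩, ?_⟩
      rintro y ⟨⟨hy0, hy1⟩, hyb⟩
      have hagree : ∀ j, j ≠ i → y j = x j := by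
        intro j hji
        have ha1 := (hyb j).1
        have ha2 := (hyb j).2
        have ha3 := hfix j hji
        rw [hxo j hji]
        linarith
      funext k
      by_cases hki : k = i
      · subst hki
        have hsum : y k + ∑ j ∈ Finset.univ.erase k, y j = 1 := by
          rw [Finset.add_sum_erase _ _ (Finset.mem_univ k)]; exact hy1
        have hsum' : x k + ∑ j ∈ Finset.univ.erase k, x j = 1 := by
          rw [Finset.add_sum_erase _ _ (Finset.mem_univ k)]; exact hx1
        have herase : ∑ j ∈ Finset.univ.erase k, y j
            = ∑ j ∈ Finset.univ.erase k, x j := by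
          refine Finset.sum_congr rfl fun j hj => ?_
          exact hagree j (Finset.ne_of_mem_erase hj)
        linarith
      · exact hagree k hki
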